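/- arXiv:2106.05222 — 9 statements merged into one kernel-verified Lean document; each statement's English description precedes it below -/
import Mathlib

section
/- Let A, Q, Z_1, …, Z_n be random variables taking values in finite sets on a common probability space. Suppose that H(Z_i | A, Q) = 0 for every i ∈ {1,…,n}, and that the tuple (Z_1,…,Z_n) is independent of Q. Then H(A) ≥ Σ_{i=1}^{n} H(Z_i | Z_1,…,Z_{i-1}) = H(Z_1,…,Z_n). -/
open Classical

noncomputable section

/-- Probability that the random variable `f` takes the value `a`, under the pmf `p`. -/
def prEq {Ω : Type} {α : Type*} [Fintype Ω] (p : Ω → ℝ) (f : Ω → α) (a : α) : ℝ :=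
  ∑ ω, if f ω = a then p ω else 0

/-- Shannon entropy of the finitely valued random variable `f` under the pmf `p`. -/
def entH {Ω : Type} {α : Type*} [Fintype Ω] (p : Ω → ℝ) (f : Ω → α) : ℝ :=
  -∑ ω, p ω * Real.log (prEq p f (f ω))

/-- Conditional Shannon entropy `H(f | g) = H(f, g) - H(g)`. -/
def condH {Ω : Type} {α β : Type*} [Fintype Ω] (p : Ω → ℝ) (f : Ω → α) (g : Ω → β) : ℝ :=
  entH p (fun ω => (f ω, g ω)) - entH p g

/-- `f` and `g` are independent random variables. -/
def indepPair {Ω : Type} {α β : Type*} [Fintype Ω] (p : Ω → ℝ) (f : Ω → α) (g : Ω → β) :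
    Prop :=
  ∀ a b, prEq p (fun ω => (f ω, g ω)) (a, b) = prEq p f a * prEq p g b

section Lemmas

variable {Ω : Type} [Fintype Ω] {p : Ω → ℝ}

lemma prEq_nonneg (hp0 : ∀ ω, 0 ≤ p ω) {α : Type*} (f : Ω → α) (a : α) :
    0 ≤ prEq p f a :=
  Finset.sum_nonneg fun ω _ => by split <;> simp [hp0 ω]

lemma sum_prEq (hp1 : ∑ ω, p ω = 1) {α : Type*} [Fintype α] (f : Ω → α) :
    ∑ a, prEq p f a = 1 := by
  rw [← hp1]
  simp only [prEq]
  rw [Finset.sum_comm]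
  exact Finset.sum_congr rfl fun ω _ => by rw [Finset.sum_ite_eq]; simp

lemma prEq_le_of_imp (hp0 : ∀ ω, 0 ≤ p ω) {α β : Type*} (f : Ω → α) (g : Ω → β)
    (a : α) (b : β) (h : ∀ ω, f ω = a → g ω = b) : prEq p f a ≤ prEq p g b := by
  simp only [prEq]
  apply Finset.sum_le_sum
  intro ω _
  by_cases hf : f ω = a
  · simp [hf, h ω hf]
  · simp only [hf, if_false]
    split <;> simp [hp0 ω]

lemma prEq_pair_le_left (hp0 : ∀ ω, 0 ≤ p ω) {α β : Type*} (f : Ω → α) (g : Ω → β)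
    (a : α) (b : β) : prEq p (fun ω => (f ω, g ω)) (a, b) ≤ prEq p f a :=
  prEq_le_of_imp hp0 _ _ _ _ fun ω h => congrArg Prod.fst h

lemma prEq_pair_le_right (hp0 : ∀ ω, 0 ≤ p ω) {α β : Type*} (f : Ω → α) (g : Ω → β)
    (a : α) (b : β) : prEq p (fun ω => (f ω, g ω)) (a, b) ≤ prEq p g b :=
  prEq_le_of_imp hp0 _ _ _ _ fun ω h => congrArg Prod.snd h

lemma prEq_self_pos (hp0 : ∀ ω, 0 ≤ p ω) {α : Type*} (f : Ω → α) {ω : Ω} (hω : p ω ≠ 0) :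
    0 < prEq p f (f ω) := by
  have h1 : p ω ≤ prEq p f (f ω) := by
    refine Finset.single_le_sum (f := fun ω' => if f ω' = f ω then p ω' else 0)
      (fun ω' _ => ?_) (Finset.mem_univ ω) |>.trans_eq' (by simp)
    show 0 ≤ (if f ω' = f ω then p ω' else 0)
    split <;> simp [hp0 ω']
  exact lt_of_lt_of_le (lt_of_le_of_ne (hp0 ω) (Ne.symm hω)) h1

lemma entH_comp_inj {α β : Type*} (f : Ω → α) (e : α → β) (he : Function.Injective e) :
    entH p (fun ω => e (f ω)) = entH p f := by
  unfold entH
  congr 1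
  apply Finset.sum_congr rfl
  intro ω _
  congr 2
  unfold prEq
  exact Finset.sum_congr rfl fun ω' _ => by simp [he.eq_iff]

lemma entH_eq_of_prEq_eq {α β : Type*} (f : Ω → α) (g : Ω → β)
    (h : ∀ ω, p ω ≠ 0 → prEq p f (f ω) = prEq p g (g ω)) : entH p f = entH p g := by
  unfold entH
  congr 1
  apply Finset.sum_congr rfl
  intro ω _
  by_cases hω : p ω = 0
  · simp [hω]
  · rw [h ω hω]

lemma entH_right_le_pair (hp0 : ∀ ω, 0 ≤ p ω) {α β : Type*} (f : Ω → α) (g : Ω → β) :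
    entH p g ≤ entH p (fun ω => (f ω, g ω)) := by
  unfold entH
  rw [neg_le_neg_iff]
  apply Finset.sum_le_sum
  intro ω _
  by_cases hω : p ω = 0
  · simp [hω]
  · apply mul_le_mul_of_nonneg_left _ (hp0 ω)
    apply Real.log_le_log (prEq_self_pos hp0 _ hω)
    exact prEq_pair_le_right hp0 f g _ _

lemma entH_const (hp1 : ∑ ω, p ω = 1) {α : Type*} (f : Ω → α)
    (h : ∀ ω ω', f ω' = f ω) : entH p f = 0 := by
  unfold entH
  have : ∀ ω : Ω, prEq p f (f ω) = 1 := by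
    intro ω
    rw [prEq, ← hp1]
    exact Finset.sum_congr rfl fun ω' _ => by simp [h ω ω']
  simp [this]

lemma entH_eq_sum {α : Type*} [Fintype α] (f : Ω → α) :
    entH p f = -∑ a, prEq p f a * Real.log (prEq p f a) := by
  unfold entH
  congr 1
  calc ∑ ω, p ω * Real.log (prEq p f (f ω))
      = ∑ ω, ∑ a, if f ω = a then p ω * Real.log (prEq p f a) else 0 := by
        refine Finset.sum_congr rfl fun ω _ => ?_
        rw [Finset.sum_ite_eq]; simp
    _ = ∑ a, ∑ ω, if f ω = a then p ω * Real.log (prEq p f a) else 0 := Finset.sum_comm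
    _ = ∑ a, prEq p f a * Real.log (prEq p f a) := by
        refine Finset.sum_congr rfl fun a _ => ?_
        rw [prEq, Finset.sum_mul]
        exact Finset.sum_congr rfl fun ω _ => by split <;> simp

lemma prEq_fst_marginal {α β : Type*} [Fintype β] (f : Ω → α) (g : Ω → β) (a : α) :
    ∑ b, prEq p (fun ω => (f ω, g ω)) (a, b) = prEq p f a := by
  simp only [prEq]
  rw [Finset.sum_comm]
  refine Finset.sum_congr rfl fun ω _ => ?_
  by_cases hf : f ω = a
  · simp [Prod.ext_iff, hf]
  · simp [Prod.ext_iff, hf]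

lemma prEq_snd_marginal {α β : Type*} [Fintype α] (f : Ω → α) (g : Ω → β) (b : β) :
    ∑ a, prEq p (fun ω => (f ω, g ω)) (a, b) = prEq p g b := by
  simp only [prEq]
  rw [Finset.sum_comm]
  refine Finset.sum_congr rfl fun ω _ => ?_
  by_cases hg : g ω = b
  · simp [Prod.ext_iff, hg]
  · simp [Prod.ext_iff, hg]

lemma entH_pair_le_add (hp0 : ∀ ω, 0 ≤ p ω) (hp1 : ∑ ω, p ω = 1)
    {α β : Type*} [Fintype α] [Fintype β] (f : Ω → α) (g : Ω → β) :
    entH p (fun ω => (f ω, g ω)) ≤ entH p f + entH p g := by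
  set r : α × β → ℝ := fun x => prEq p (fun ω => (f ω, g ω)) x with hr
  set pa : α → ℝ := fun a => prEq p f a with hpa
  set qb : β → ℝ := fun b => prEq p g b with hqb
  have key : 0 ≤ ∑ x : α × β,
      (pa x.1 * qb x.2 - r x + r x * Real.log (r x)
        - r x * Real.log (pa x.1 * qb x.2)) := by
    apply Finset.sum_nonneg
    intro x _
    have hrnn : 0 ≤ r x := prEq_nonneg hp0 _ x
    rcases eq_or_lt_of_le hrnn with h0 | hpos
    · simp only [← h0]
      simp [mul_nonneg (prEq_nonneg hp0 f x.1) (prEq_nonneg hp0 g x.2)]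
      exact mul_nonneg (prEq_nonneg hp0 f x.1) (prEq_nonneg hp0 g x.2)
    · have hle1 : r x ≤ pa x.1 := by
        have := prEq_pair_le_left hp0 f g x.1 x.2
        simpa [hr, hpa] using this
      have hle2 : r x ≤ qb x.2 := by
        have := prEq_pair_le_right hp0 f g x.1 x.2
        simpa [hr, hqb] using this
      have hpapos : 0 < pa x.1 := lt_of_lt_of_le hpos hle1
      have hqbpos : 0 < qb x.2 := lt_of_lt_of_le hpos hle2
      have hprod : 0 < pa x.1 * qb x.2 := mul_pos hpapos hqbpos
      have hlog : Real.log (pa x.1 * qb x.2 / r x) ≤ pa x.1 * qb x.2 / r x - 1 :=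
        Real.log_le_sub_one_of_pos (div_pos hprod hpos)
      have hdiv : Real.log (pa x.1 * qb x.2 / r x)
          = Real.log (pa x.1 * qb x.2) - Real.log (r x) :=
        Real.log_div hprod.ne' hpos.ne'
      rw [hdiv] at hlog
      have := mul_le_mul_of_nonneg_left hlog hpos.le
      rw [mul_sub, mul_sub, mul_one, mul_div_cancel₀ _ hpos.ne'] at this
      linarith
  have h1 : ∑ x : α × β, pa x.1 * qb x.2 = 1 := by
    rw [Fintype.sum_prod_type]
    simp only [← Finset.mul_sum]
    rw [← Finset.sum_mul, sum_prEq hp1 f, sum_prEq hp1 g, one_mul]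
  have h2 : ∑ x : α × β, r x = 1 := sum_prEq hp1 _
  have h3 : ∑ x : α × β, r x * Real.log (pa x.1 * qb x.2)
      = ∑ x : α × β, (r x * Real.log (pa x.1) + r x * Real.log (qb x.2)) := by
    refine Finset.sum_congr rfl fun x _ => ?_
    have hrnn : 0 ≤ r x := prEq_nonneg hp0 _ x
    rcases eq_or_lt_of_le hrnn with h0 | hpos
    · simp [← h0]
    · have hle1 : r x ≤ pa x.1 := by
        simpa [hr, hpa] using prEq_pair_le_left hp0 f g x.1 x.2
      have hle2 : r x ≤ qb x.2 := by
        simpa [hr, hqb] using prEq_pair_le_right hp0 f g x.1 x.2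
      rw [Real.log_mul (lt_of_lt_of_le hpos hle1).ne' (lt_of_lt_of_le hpos hle2).ne',
        mul_add]
  have h4 : ∑ x : α × β, r x * Real.log (pa x.1)
      = ∑ a, pa a * Real.log (pa a) := by
    rw [Fintype.sum_prod_type]
    refine Finset.sum_congr rfl fun a _ => ?_
    show ∑ y : β, r (a, y) * Real.log (pa a) = _
    rw [← Finset.sum_mul]
    congr 1
    exact prEq_fst_marginal f g a
  have h5 : ∑ x : α × β, r x * Real.log (qb x.2)
      = ∑ b, qb b * Real.log (qb b) := by
    rw [Fintype.sum_prod_type_right]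
    refine Finset.sum_congr rfl fun b _ => ?_
    show ∑ x : α, r (x, b) * Real.log (qb b) = _
    rw [← Finset.sum_mul]
    congr 1
    exact prEq_snd_marginal f g b
  have expand : ∑ x : α × β,
      (pa x.1 * qb x.2 - r x + r x * Real.log (r x)
        - r x * Real.log (pa x.1 * qb x.2))
      = (∑ x : α × β, pa x.1 * qb x.2) - (∑ x : α × β, r x)
        + (∑ x : α × β, r x * Real.log (r x))
        - (∑ x : α × β, r x * Real.log (pa x.1 * qb x.2)) := by
    simp [Finset.sum_sub_distrib, Finset.sum_add_distrib]
  rw [expand, h1, h2, h3, Finset.sum_add_distrib, h4, h5] at key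
  rw [entH_eq_sum, entH_eq_sum, entH_eq_sum]
  have hsum : ∑ x : α × β, r x * Real.log (r x)
      = ∑ x : α × β, prEq p (fun ω => (f ω, g ω)) x
          * Real.log (prEq p (fun ω => (f ω, g ω)) x) := rfl
  linarith [key]

lemma entH_pair_of_indep (hp0 : ∀ ω, 0 ≤ p ω) (hp1 : ∑ ω, p ω = 1)
    {α β : Type*} [Fintype α] [Fintype β] (f : Ω → α) (g : Ω → β)
    (h : indepPair p f g) :
    entH p (fun ω => (f ω, g ω)) = entH p f + entH p g := by
  rw [entH_eq_sum, entH_eq_sum, entH_eq_sum]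
  have hterm : ∀ x : α × β,
      prEq p (fun ω => (f ω, g ω)) x * Real.log (prEq p (fun ω => (f ω, g ω)) x)
      = prEq p g x.2 * (prEq p f x.1 * Real.log (prEq p f x.1))
        + prEq p f x.1 * (prEq p g x.2 * Real.log (prEq p g x.2)) := by
    intro x
    have hx : prEq p (fun ω => (f ω, g ω)) x = prEq p f x.1 * prEq p g x.2 := by
      have := h x.1 x.2
      simpa using this
    rw [hx]
    rcases eq_or_lt_of_le (prEq_nonneg hp0 f x.1) with h1 | h1
    · simp [← h1]
    rcases eq_or_lt_of_le (prEq_nonneg hp0 g x.2) with h2 | h2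
    · simp [← h2]
    rw [Real.log_mul h1.ne' h2.ne']
    ring
  rw [Finset.sum_congr rfl fun x _ => hterm x, Finset.sum_add_distrib]
  rw [Fintype.sum_prod_type_right
    (f := fun x : α × β => prEq p g x.2 * (prEq p f x.1 * Real.log (prEq p f x.1)))]
  rw [Fintype.sum_prod_type
    (f := fun x : α × β => prEq p f x.1 * (prEq p g x.2 * Real.log (prEq p g x.2)))]
  simp only [← Finset.sum_mul, ← Finset.mul_sum]
  rw [sum_prEq hp1 f, sum_prEq hp1 g]
  ring

lemma prEq_pair_eq_of_condH_zero (hp0 : ∀ ω, 0 ≤ p ω) {α β : Type*}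
    (f : Ω → α) (g : Ω → β) (h : condH p f g = 0) :
    ∀ ω, p ω ≠ 0 → prEq p (fun ω' => (f ω', g ω')) (f ω, g ω) = prEq p g (g ω) := by
  have hsum : ∑ ω, p ω * (Real.log (prEq p g (g ω))
      - Real.log (prEq p (fun ω' => (f ω', g ω')) (f ω, g ω))) = 0 := by
    have h' := h
    unfold condH entH at h'
    simp only [mul_sub, Finset.sum_sub_distrib]
    linarith
  have hnn : ∀ ω ∈ Finset.univ (α := Ω), 0 ≤ p ω * (Real.log (prEq p g (g ω))
      - Real.log (prEq p (fun ω' => (f ω', g ω')) (f ω, g ω))) := by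
    intro ω _
    by_cases hω : p ω = 0
    · simp [hω]
    · apply mul_nonneg (hp0 ω)
      rw [sub_nonneg]
      apply Real.log_le_log (prEq_self_pos hp0 (fun ω' => (f ω', g ω')) hω)
      exact prEq_pair_le_right hp0 f g _ _
  intro ω hω
  have hz := (Finset.sum_eq_zero_iff_of_nonneg hnn).1 hsum ω (Finset.mem_univ ω)
  have hlog : Real.log (prEq p (fun ω' => (f ω', g ω')) (f ω, g ω))
      = Real.log (prEq p g (g ω)) := by
    rcases mul_eq_zero.1 hz with h1 | h1
    · exact absurd h1 hω
    · linarith [sub_eq_zero.1 h1]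
  have hpos1 : 0 < prEq p (fun ω' => (f ω', g ω')) (f ω, g ω) :=
    prEq_self_pos hp0 (fun ω' => (f ω', g ω')) hω
  have hpos2 : 0 < prEq p g (g ω) := prEq_self_pos hp0 g hω
  have := Real.exp_log hpos1
  rw [hlog, Real.exp_log hpos2] at this
  exact this.symm

lemma determined_of_prEq_eq (hp0 : ∀ ω, 0 ≤ p ω) {α β : Type*}
    (f : Ω → α) (g : Ω → β)
    (h : ∀ ω, p ω ≠ 0 → prEq p (fun ω' => (f ω', g ω')) (f ω, g ω) = prEq p g (g ω)) :
    ∀ ω ω', p ω ≠ 0 → p ω' ≠ 0 → g ω' = g ω → f ω' = f ω := by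
  intro ω ω' hω hω' hg
  by_contra hne
  have hpairne : ¬ ((f ω', g ω') = (f ω, g ω)) := fun hc => hne (congrArg Prod.fst hc)
  have hpairzero : (fun ω'' => if (f ω'', g ω'') = (f ω, g ω) then p ω'' else 0) ω' = 0 :=
    if_neg hpairne
  have e1 : ∑ ω'' ∈ Finset.univ.erase ω', (if (f ω'', g ω'') = (f ω, g ω) then p ω'' else 0)
      = ∑ ω'' : Ω, (if (f ω'', g ω'') = (f ω, g ω) then p ω'' else 0) :=
    Finset.sum_erase (f := fun ω'' => if (f ω'', g ω'') = (f ω, g ω) then p ω'' else 0)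
      Finset.univ hpairzero
  have e1' : prEq p (fun x => (f x, g x)) (f ω, g ω)
      = ∑ ω'' : Ω, (if (f ω'', g ω'') = (f ω, g ω) then p ω'' else 0) :=
by
    unfold prEq
    refine Finset.sum_congr rfl fun x _ => ?_
    congr 1
  have e2 : ∑ ω'' ∈ Finset.univ.erase ω', (if (f ω'', g ω'') = (f ω, g ω) then p ω'' else 0)
      ≤ ∑ ω'' ∈ Finset.univ.erase ω', (if g ω'' = g ω then p ω'' else 0) := by
    refine Finset.sum_le_sum fun ω'' _ => ?_
    split_ifs with h1 h2 h3
    · exact le_refl _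
    · exact absurd (congrArg Prod.snd h1) h2
    · exact hp0 _
    · exact le_refl _
  have e3 : (if g ω' = g ω then p ω' else 0)
      + ∑ ω'' ∈ Finset.univ.erase ω', (if g ω'' = g ω then p ω'' else 0)
      = prEq p g (g ω) :=
    Finset.add_sum_erase Finset.univ (f := fun ω'' => if g ω'' = g ω then p ω'' else 0)
      (Finset.mem_univ ω')
  rw [if_pos hg] at e3
  have hp' : 0 < p ω' := lt_of_le_of_ne (hp0 ω') (Ne.symm hω')
  have hh := h ω hω
  rw [e1'] at hh
  linarith

lemma prEq_pair_eq_of_determined {α β : Type*}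
    (f : Ω → α) (g : Ω → β)
    (h : ∀ ω ω', p ω ≠ 0 → p ω' ≠ 0 → g ω' = g ω → f ω' = f ω) :
    ∀ ω, p ω ≠ 0 → prEq p (fun ω' => (f ω', g ω')) (f ω, g ω) = prEq p g (g ω) := by
  intro ω hω
  simp only [prEq]
  refine Finset.sum_congr rfl fun ω' _ => ?_
  by_cases hp : p ω' = 0
  · simp [hp]
  · by_cases hg : g ω' = g ω
    · simp [Prod.ext_iff, hg, h ω ω' hω hp hg]
    · simp [Prod.ext_iff, hg]

end Lemmas

set_option maxHeartbeats 1000000 in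
/-- Let `A, Q, Z_1, …, Z_n` be finitely valued random variables on a common (finite)
probability space. If `H(Z_i | A, Q) = 0` for every `i` and the tuple `(Z_1, …, Z_n)` is
independent of `Q`, then `H(A) ≥ Σ_{i=1}^n H(Z_i | Z_1, …, Z_{i-1}) = H(Z_1, …, Z_n)`. -/
theorem entropy_answer_ge_chain_sum
    {Ω : Type} [Fintype Ω] (p : Ω → ℝ) (hp0 : ∀ ω, 0 ≤ p ω) (hp1 : ∑ ω, p ω = 1)
    {n : ℕ} {α : Fin n → Type} [∀ i, Fintype (α i)]
    {A : Type} [Fintype A] {Qv : Type} [Fintype Qv]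
    (fA : Ω → A) (fQ : Ω → Qv) (Z : ∀ i : Fin n, Ω → α i)
    (hzero : ∀ i, condH p (Z i) (fun ω => (fA ω, fQ ω)) = 0)
    (hindep : indepPair p (fun ω => (fun i => Z i ω)) fQ) :
    (∑ i, condH p (Z i) (fun ω => (fun j : Fin i.1 => Z (Fin.castLE i.isLt.le j) ω)))
        ≤ entH p fA ∧
    (∑ i, condH p (Z i) (fun ω => (fun j : Fin i.1 => Z (Fin.castLE i.isLt.le j) ω)))
        = entH p (fun ω => (fun i => Z i ω)) := by
  classical
  -- the chain rule, by induction
  have key : ∀ k : ℕ, (hk : k ≤ n) →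
      (∑ i ∈ Finset.range k, (if hi : i < n then
          condH p (Z ⟨i, hi⟩) (fun ω => fun j : Fin i => Z (Fin.castLE hi.le j) ω) else 0))
      = entH p (fun ω => fun j : Fin k => Z (Fin.castLE hk j) ω) := by
    intro k
    induction k with
    | zero =>
      intro hk
      rw [Finset.sum_range_zero]
      exact (entH_const hp1 _ (fun ω ω' => funext fun j => j.elim0)).symm
    | succ k ih =>
      intro hk1
      have hkn : k < n := hk1
      rw [Finset.sum_range_succ, ih hkn.le, dif_pos hkn]
      have einj : Function.Injective
          (fun v : (∀ j : Fin (k+1), α (Fin.castLE hk1 j)) =>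
            ((v (Fin.last k) : α ⟨k, hkn⟩),
              (fun j : Fin k => v j.castSucc : ∀ j : Fin k, α (Fin.castLE hkn.le j)))) := by
        intro v w hvw
        funext j
        refine Fin.lastCases ?_ ?_ j
        · exact congrArg Prod.fst hvw
        · intro j'
          exact congrFun (congrArg Prod.snd hvw) j'
      have epair : entH p
          (fun ω => (Z ⟨k, hkn⟩ ω, fun j : Fin k => Z (Fin.castLE hkn.le j) ω))
          = entH p (fun ω => fun j : Fin (k+1) => Z (Fin.castLE hk1 j) ω) :=
        entH_comp_inj (fun ω => fun j : Fin (k+1) => Z (Fin.castLE hk1 j) ω) _ einj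
      simp only [condH]
      rw [epair]
      ring
  -- rewriting the goal sum as a range sum
  have hsum_rw : (∑ i, condH p (Z i)
        (fun ω => (fun j : Fin i.1 => Z (Fin.castLE i.isLt.le j) ω)))
      = ∑ i ∈ Finset.range n, (if hi : i < n then
          condH p (Z ⟨i, hi⟩) (fun ω => fun j : Fin i => Z (Fin.castLE hi.le j) ω) else 0) := by
    rw [← Fin.sum_univ_eq_sum_range]
    refine Finset.sum_congr rfl fun i _ => ?_
    rw [dif_pos i.isLt]
  have htotal := key n le_rfl
  have part2 : (∑ i, condH p (Z i)
        (fun ω => (fun j : Fin i.1 => Z (Fin.castLE i.isLt.le j) ω)))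
      = entH p (fun ω => (fun i => Z i ω)) := by
    rw [hsum_rw, htotal]
    exact (entH_comp_inj (p := p)
      (fun ω => fun j : Fin n => Z (Fin.castLE le_rfl j) ω)
      (fun v => (fun i : Fin n => v i)) (fun v w h => h)).symm
  refine ⟨?_, part2⟩
  -- part 1
  have hdet1 : ∀ i : Fin n, ∀ ω ω', p ω ≠ 0 → p ω' ≠ 0 →
      (fun ω => (fA ω, fQ ω)) ω' = (fun ω => (fA ω, fQ ω)) ω → Z i ω' = Z i ω :=
    fun i => determined_of_prEq_eq hp0 (Z i) (fun ω => (fA ω, fQ ω))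
      (prEq_pair_eq_of_condH_zero hp0 (Z i) (fun ω => (fA ω, fQ ω)) (hzero i))
  have hdet : ∀ ω ω', p ω ≠ 0 → p ω' ≠ 0 →
      (fun ω => (fA ω, fQ ω)) ω' = (fun ω => (fA ω, fQ ω)) ω →
      (fun ω => (fun i => Z i ω)) ω' = (fun ω => (fun i => Z i ω)) ω :=
    fun ω ω' hω hω' hg => funext fun i => hdet1 i ω ω' hω hω' hg
  have hZW : entH p (fun ω => ((fun i => Z i ω), (fA ω, fQ ω)))
      = entH p (fun ω => (fA ω, fQ ω)) :=
    entH_eq_of_prEq_eq _ _ (fun ω hω =>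
      prEq_pair_eq_of_determined (fun ω => (fun i => Z i ω)) (fun ω => (fA ω, fQ ω)) hdet ω hω)
  have hZQ : entH p (fun ω => ((fun i => Z i ω), fQ ω))
      = entH p (fun ω => (fun i => Z i ω)) + entH p fQ :=
    entH_pair_of_indep hp0 hp1 _ fQ hindep
  have einj2 : Function.Injective
      (fun x : (∀ i, α i) × (A × Qv) => (x.2.1, (x.1, x.2.2))) := by
    intro x y h
    rcases x with ⟨x1, x2, x3⟩
    rcases y with ⟨y1, y2, y3⟩
    simp_all [Prod.ext_iff]
  have hre : entH p (fun ω => (fA ω, ((fun i => Z i ω), fQ ω)))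
      = entH p (fun ω => ((fun i => Z i ω), (fA ω, fQ ω))) :=
    entH_comp_inj (fun ω => ((fun i => Z i ω), (fA ω, fQ ω))) _ einj2
  have h3 : entH p (fun ω => ((fun i => Z i ω), fQ ω))
      ≤ entH p (fun ω => (fA ω, ((fun i => Z i ω), fQ ω))) :=
    entH_right_le_pair hp0 fA _
  have h4 : entH p (fun ω => (fA ω, fQ ω)) ≤ entH p fA + entH p fQ :=
    entH_pair_le_add hp0 hp1 fA fQ
  rw [part2]
  linarith
end
end

section
/- Let F be a field and 1 ≤ L ≤ D ≤ K integers. For i = 1,…,n, let W_i be a D-element subset of {1,…,K}, let V_i be an L×D MDS matrix over F, and let U_i be the L×K matrix obtained by placing the columns of V_i at the positions indexed by W_i (in increasing order) and zeros in all other columns. Let N_i = |W_i \ (W_1 ∪ … ∪ W_{i-1})| (with N_1 = |W_1| = D). Then the (nL)×K matrix obtained by stacking U_1, …, U_n vertically has rank at least Σ_{i=1}^{n} min{L, N_i}. -/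
open Matrix

/-- An `L × D` matrix is MDS if every `L × L` submatrix formed by `L` of its columns is
invertible. -/
def IsMDS {F : Type} [Field F] {L D : ℕ} (V : Matrix (Fin L) (Fin D) F) : Prop :=
  ∀ g : Fin L → Fin D, Function.Injective g → (V.submatrix id g).det ≠ 0

section Aux
variable {F : Type} [Field F]

lemma aux_exists_rows {L m : ℕ} (B : Matrix (Fin L) (Fin m) F)
    (hB : LinearIndependent F (fun j => Bᵀ j)) :
    ∃ ρ : Fin m → Fin L, Function.Injective ρ ∧ IsUnit (B.submatrix ρ id) := by
  classical
  have hrk : Bᵀ.rank = m := by have h := hB.rank_matrix; simp only [Fintype.card_fin] at h; exact h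
  have hrkB : B.rank = m := by rw [← Matrix.rank_transpose]; exact hrk
  have hspan : Submodule.span F (Set.range B) = ⊤ := by
    apply Submodule.eq_top_of_finrank_eq
    rw [show Set.range B = Set.range B.row from rfl, ← Matrix.rank_eq_finrank_span_row, hrkB, Module.finrank_fintype_fun_eq_card,
      Fintype.card_fin]
  obtain ⟨b, hbsub, hbspan, hbli⟩ := exists_linearIndependent F (Set.range B)
  rw [hspan] at hbspan
  haveI : Fintype b := hbli.setFinite.fintype
  let bas : Module.Basis b F (Fin m → F) := Module.Basis.mk hbli (by rw [Subtype.range_coe, hbspan])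
  have hcard : Fintype.card b = m := by
    have h1 := Module.finrank_eq_card_basis bas
    rw [Module.finrank_fintype_fun_eq_card, Fintype.card_fin] at h1
    exact h1.symm
  let e : Fin m ≃ b := (Fintype.equivFinOfCardEq hcard).symm
  have hmem : ∀ x : Fin m, ((e x : Fin m → F)) ∈ Set.range B := fun x => hbsub (e x).2
  choose ρ hρ using hmem
  have hrows : (fun x : Fin m => B.submatrix ρ id x) = fun x => ((e x : Fin m → F)) := by
    funext x
    ext j
    simp [Matrix.submatrix_apply, hρ x]
  have hli2 : LinearIndependent F (fun x : Fin m => B.submatrix ρ id x) := by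
    rw [hrows]
    exact hbli.comp e e.injective
  refine ⟨ρ, ?_, Matrix.linearIndependent_rows_iff_isUnit.1 hli2⟩
  intro x y hxy
  apply e.injective
  apply Subtype.ext
  rw [← hρ x, ← hρ y, hxy]

lemma aux_mds_cols {L D m : ℕ} (hLD : L ≤ D)
    (V : Matrix (Fin L) (Fin D) F) (hV : IsMDS V) (hmL : m ≤ L)
    (τ : Fin m → Fin D) (hτ : Function.Injective τ) :
    LinearIndependent F (fun j : Fin m => (fun l => V l (τ j))) := by
  classical
  obtain ⟨G, hG1, -, hGcard⟩ := Finset.exists_subsuperset_card_eq (n := L)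
    (Finset.subset_univ (Finset.image τ Finset.univ))
    (by
      rw [Finset.card_image_of_injective _ hτ, Finset.card_univ, Fintype.card_fin]
      exact hmL)
    (by rw [Finset.card_univ, Fintype.card_fin]; exact hLD)
  set iso := G.orderIsoOfFin hGcard with hiso
  let g : Fin L → Fin D := fun b => (iso b : Fin D)
  have hginj : Function.Injective g := fun a b hab => iso.injective (Subtype.ext hab)
  have hunit : IsUnit (V.submatrix id g) :=
    (Matrix.isUnit_iff_isUnit_det _).2 (isUnit_iff_ne_zero.2 (hV g hginj))
  have hcols := Matrix.linearIndependent_cols_iff_isUnit.2 hunit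
  have hmemG : ∀ j, τ j ∈ G := fun j => hG1 (Finset.mem_image_of_mem τ (Finset.mem_univ j))
  let θ : Fin m → Fin L := fun j => iso.symm ⟨τ j, hmemG j⟩
  have hgθ : ∀ j, g (θ j) = τ j := by
    intro j
    show ((iso (iso.symm ⟨τ j, hmemG j⟩) : G) : Fin D) = τ j
    rw [OrderIso.apply_symm_apply]
  have hθinj : Function.Injective θ := by
    intro a b hab
    have := congrArg g hab
    rw [hgθ, hgθ] at this
    exact hτ this
  have := hcols.comp θ hθinj
  convert this using 1
  funext j
  ext l
  simp [Matrix.transpose_apply, Matrix.submatrix_apply, hgθ j]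

lemma aux_card_le_rank {mm nn α : Type} [Fintype mm] [Fintype nn] [Fintype α]
    (A : Matrix mm nn F) (r : α → mm)
    (h : LinearIndependent F (fun x => A (r x))) : Fintype.card α ≤ A.rank := by
  rw [Matrix.rank_eq_finrank_span_row]
  set P := Submodule.span F (Set.range A) with hP
  have hmem : ∀ x, A (r x) ∈ P := fun x => Submodule.subset_span ⟨r x, rfl⟩
  have h' : LinearIndependent F (fun x => (⟨A (r x), hmem x⟩ : P)) :=
    LinearIndependent.of_comp P.subtype h
  exact h'.fintype_card_le_finrank

end Aux

/-- For `i = 1, …, n`, let `W_i` be a `D`-element subset of `{1, …, K}`, `V_i` an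
`L × D` MDS matrix and `U_i` the `L × K` matrix obtained by placing the columns of
`V_i` at the positions indexed by `W_i` (in increasing order), with zeros elsewhere.
With `N_i = |W_i \ (W_1 ∪ ⋯ ∪ W_{i-1})|`, the `(nL) × K` matrix obtained by stacking
`U_1, …, U_n` has rank at least `Σ_i min{L, N_i}`. -/
theorem rank_stacked_padded_mds_ge (F : Type) [Field F] (K D L n : ℕ)
    (hL : 1 ≤ L) (hLD : L ≤ D) (hDK : D ≤ K)
    (W : Fin n → Finset (Fin K)) (hW : ∀ i, (W i).card = D)
    (V : ∀ i : Fin n, Matrix (Fin L) (Fin D) F) (hV : ∀ i, IsMDS (V i))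
    (U : ∀ i : Fin n, Matrix (Fin L) (Fin K) F)
    (hU : ∀ i l k, U i l k =
      if hk : k ∈ W i then V i l (((W i).orderIsoOfFin (hW i)).symm ⟨k, hk⟩) else 0) :
    ∑ i, min L ((W i \ (Finset.univ.filter (fun j => j < i)).biUnion W).card)
      ≤ (Matrix.of (fun q : Fin n × Fin L => fun k : Fin K => U q.1 q.2 k)).rank := by
  classical
  set S : Fin n → Finset (Fin K) := fun i => (Finset.univ.filter (fun j => j < i)).biUnion W
    with hS
  set m : Fin n → ℕ := fun i => min L ((W i \ S i).card) with hm
  -- choose the "new columns" T i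
  have hTex : ∀ i, ∃ T : Finset (Fin K), T ⊆ W i \ S i ∧ T.card = m i :=
    fun i => Finset.exists_subset_card_eq (min_le_right _ _)
  choose T hTsub hTcard using hTex
  -- enumerate T i
  set σ : ∀ i, Fin (m i) → Fin K := fun i x => (T i).orderEmbOfFin (hTcard i) x with hσ
  have hσT : ∀ i x, σ i x ∈ T i := fun i x => (T i).orderEmbOfFin_mem (hTcard i) x
  have hσW : ∀ i x, σ i x ∈ W i := fun i x => (Finset.mem_sdiff.1 (hTsub i (hσT i x))).1
  have hσS : ∀ i x, σ i x ∉ S i := fun i x => (Finset.mem_sdiff.1 (hTsub i (hσT i x))).2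
  have hσinj : ∀ i, Function.Injective (σ i) := by
    intro i a b hab
    exact ((T i).orderEmbOfFin (hTcard i)).injective hab
  -- corresponding columns of V i
  set τ : ∀ i, Fin (m i) → Fin D :=
    fun i x => ((W i).orderIsoOfFin (hW i)).symm ⟨σ i x, hσW i x⟩ with hτ
  have hτinj : ∀ i, Function.Injective (τ i) := by
    intro i a b hab
    have : (⟨σ i a, hσW i a⟩ : (W i : Finset (Fin K))) = ⟨σ i b, hσW i b⟩ :=
      ((W i).orderIsoOfFin (hW i)).symm.injective hab
    rw [Subtype.mk.injEq] at this
    exact hσinj i this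
  have hUσ : ∀ i l b, U i l (σ i b) = V i l (τ i b) := by
    intro i l b
    rw [hU i l (σ i b), dif_pos (hσW i b)]
  -- the diagonal blocks
  set B : ∀ i, Matrix (Fin L) (Fin (m i)) F := fun i => Matrix.of fun l j => V i l (τ i j)
    with hB
  have hBli : ∀ i, LinearIndependent F (fun j => (B i)ᵀ j) := by
    intro i
    exact aux_mds_cols hLD (V i) (hV i) (min_le_left _ _) (τ i) (hτinj i)
  have hρex : ∀ i, ∃ ρ : Fin (m i) → Fin L,
      Function.Injective ρ ∧ IsUnit ((B i).submatrix ρ id) :=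
    fun i => aux_exists_rows (B i) (hBli i)
  choose ρ hρinj hρunit using hρex
  -- row selection in the stacked matrix
  set A : Matrix (Fin n × Fin L) (Fin K) F :=
    Matrix.of (fun q : Fin n × Fin L => fun k : Fin K => U q.1 q.2 k) with hA
  set r : ((i : Fin n) × Fin (m i)) → Fin n × Fin L := fun x => (x.1, ρ x.1 x.2) with hr
  have hli : LinearIndependent F (fun x : (i : Fin n) × Fin (m i) => A (r x)) := by
    rw [Fintype.linearIndependent_iff]
    intro g hg
    have wf : WellFounded ((· > ·) : Fin n → Fin n → Prop) := wellFounded_gt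
    have key : ∀ i : Fin n, ∀ y : Fin (m i), g ⟨i, y⟩ = 0 := by
      intro i0
      refine wf.induction (C := fun i => ∀ y : Fin (m i), g ⟨i, y⟩ = 0) i0 ?_
      intro i IH
      have hvm : Matrix.vecMul (fun y => g ⟨i, y⟩) ((B i).submatrix (ρ i) id)
          = Matrix.vecMul 0 ((B i).submatrix (ρ i) id) := by
        rw [Matrix.zero_vecMul]
        funext b
        have h0 : ∑ x : (i : Fin n) × Fin (m i), g x * A (r x) (σ i b) = 0 := by
          have := congrFun hg (σ i b)
          simpa using this
        rw [← Finset.univ_sigma_univ, Finset.sum_sigma] at h0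
        have hsing : ∑ j : Fin n, ∑ y : Fin (m j),
            g ⟨j, y⟩ * A (r ⟨j, y⟩) (σ i b)
            = ∑ y : Fin (m i), g ⟨i, y⟩ * A (r ⟨i, y⟩) (σ i b) := by
          refine Finset.sum_eq_single i (fun j _ hji => ?_)
            (fun h => absurd (Finset.mem_univ i) h)
          rcases lt_or_gt_of_ne hji with hlt | hgt
          · -- j < i : the columns σ i b are outside W j
            refine Finset.sum_eq_zero fun y _ => ?_
            have hnot : σ i b ∉ W j := by
              intro hmemj
              exact hσS i b (Finset.mem_biUnion.2
                ⟨j, Finset.mem_filter.2 ⟨Finset.mem_univ j, hlt⟩, hmemj⟩)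
            have : A (r ⟨j, y⟩) (σ i b) = 0 := by
              show U j (ρ j y) (σ i b) = 0
              rw [hU j (ρ j y) (σ i b), dif_neg hnot]
            rw [this, mul_zero]
          · -- j > i : coefficients vanish by induction hypothesis
            refine Finset.sum_eq_zero fun y _ => ?_
            rw [IH j hgt y, zero_mul]
        rw [hsing] at h0
        have hAval : ∀ y : Fin (m i), A (r ⟨i, y⟩) (σ i b)
            = ((B i).submatrix (ρ i) id) y b := by
          intro y
          show U i (ρ i y) (σ i b) = V i (ρ i y) (τ i b)
          exact hUσ i (ρ i y) b
        simp only [Matrix.vecMul, dotProduct, Pi.zero_apply]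
        rw [← h0]
        exact Finset.sum_congr rfl fun y _ => by rw [hAval y]
      have hinj : Function.Injective ((B i).submatrix (ρ i) id).vecMul :=
        Matrix.vecMul_injective_iff_isUnit.2 (hρunit i)
      have hzero : (fun y => g ⟨i, y⟩) = 0 := hinj hvm
      intro y
      exact congrFun hzero y
    intro x
    exact key x.1 x.2
  have hcard := aux_card_le_rank A r hli
  rw [Fintype.card_sigma] at hcard
  simpa using hcard
end

section
/- Let 1 ≤ L ≤ D ≤ K be integers and R = K mod D. Let n ≥ 1 and N_1, …, N_n be integers with N_1 = D, 1 ≤ N_i ≤ D for all i, and Σ_{i=1}^{n} N_i = K. Then Σ_{i=1}^{n} min{L, N_i} ≥ L·⌊K/D⌋ + min{L, R}. -/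
private theorem key_min_step (D L a m : ℕ) (hLD : L ≤ D) (hD : 0 < D) (ha : a ≤ D) :
    L * ((a + m) / D) + min L ((a + m) % D) ≤ min L a + (L * (m / D) + min L (m % D)) := by
  obtain ⟨q, r, hr, rfl⟩ : ∃ q r, r < D ∧ m = D * q + r :=
    ⟨m / D, m % D, Nat.mod_lt _ hD, (Nat.div_add_mod m D).symm⟩
  rw [show a + (D * q + r) = (a + r) + q * D by ring]
  rw [Nat.add_mul_div_right _ _ hD, Nat.add_mul_mod_self_right]
  rw [show D * q + r = r + q * D by ring, Nat.add_mul_div_right _ _ hD,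
    Nat.add_mul_mod_self_right, Nat.div_eq_of_lt hr, Nat.mod_eq_of_lt hr]
  rcases lt_or_ge (a + r) D with h | h
  · rw [Nat.div_eq_of_lt h, Nat.mod_eq_of_lt h]
    set t := L * (0 + q) with ht
    omega
  · have h2 : a + r = (a + r - D) + 1 * D := by omega
    rw [h2, Nat.add_mul_div_right _ _ hD, Nat.add_mul_mod_self_right,
      Nat.div_eq_of_lt (by omega : a + r - D < D), Nat.mod_eq_of_lt (by omega : a + r - D < D)]
    have h3 : L * (0 + 1 + q) = L + L * (0 + q) := by ring
    rw [h3]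
    set t := L * (0 + q) with ht
    omega

private theorem aux_min_sum {D L : ℕ} (hLD : L ≤ D) (hD : 0 < D) {ι : Type*}
    [DecidableEq ι] (s : Finset ι) (N : ι → ℕ) (h : ∀ i ∈ s, N i ≤ D) :
    L * ((∑ i ∈ s, N i) / D) + min L ((∑ i ∈ s, N i) % D) ≤ ∑ i ∈ s, min L (N i) := by
  induction s using Finset.induction_on with
  | empty => simp
  | @insert a s ha ih =>
    rw [Finset.sum_insert ha, Finset.sum_insert ha]
    calc L * ((N a + ∑ i ∈ s, N i) / D) + min L ((N a + ∑ i ∈ s, N i) % D)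
        ≤ min L (N a) + (L * ((∑ i ∈ s, N i) / D) + min L ((∑ i ∈ s, N i) % D)) :=
          key_min_step D L (N a) _ hLD hD (h a (Finset.mem_insert_self a s))
      _ ≤ min L (N a) + ∑ i ∈ s, min L (N i) := by
          gcongr
          exact ih fun i hi => h i (Finset.mem_insert_of_mem hi)

/-- Let `1 ≤ L ≤ D ≤ K`, `R = K % D`, `n ≥ 1` and `N_1, …, N_n` integers with
`N_1 = D`, `1 ≤ N_i ≤ D` for all `i`, and `Σ_i N_i = K`. Then
`Σ_i min{L, N_i} ≥ L·⌊K/D⌋ + min{L, R}`. -/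
theorem sum_min_ge_of_partition (K D L : ℕ) (hL : 1 ≤ L) (hLD : L ≤ D) (hDK : D ≤ K)
    (n : ℕ) (hn : 1 ≤ n) (N : Fin n → ℕ)
    (hN1 : N ⟨0, hn⟩ = D)
    (hNlb : ∀ i, 1 ≤ N i) (hNub : ∀ i, N i ≤ D)
    (hsum : ∑ i, N i = K) :
    L * (K / D) + min L (K % D) ≤ ∑ i, min L (N i) := by
  have hD : 0 < D := lt_of_lt_of_le hL hLD
  have := aux_min_sum hLD hD Finset.univ N (fun i _ => hNub i)
  rwa [hsum] at this
end

section
/- Let 1 ≤ L ≤ D ≤ K be integers and R = K mod D. Consider the integer linear program: minimize Σ_{j=1}^{L} j·T_j + Σ_{j=L+1}^{D} L·T_j over nonnegative integers T_1, …, T_D subject to Σ_{j=1}^{D} j·T_j = K and T_D ≥ 1. This program is feasible, and its minimum value equals L·⌊K/D⌋ + min{L, R}; in particular, the assignment T_D = ⌊K/D⌋, T_R = 1 when R > 0 (all other T_j = 0) is an optimal solution. -/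
section aux

variable (D L : ℕ)

/-- value function -/
def ilpF (D L x : ℕ) : ℕ := L * (x / D) + min L (x % D)

lemma ilpF_subadd (hL : 1 ≤ L) (hLD : L ≤ D) (a b : ℕ) :
    ilpF D L (a + b) ≤ ilpF D L a + ilpF D L b := by
  have hD : 0 < D := lt_of_lt_of_le hL hLD
  have ha : a = a % D + D * (a / D) := (Nat.mod_add_div a D).symm
  have hb : b = b % D + D * (b / D) := (Nat.mod_add_div b D).symm
  have hra : a % D < D := Nat.mod_lt _ hD
  have hrb : b % D < D := Nat.mod_lt _ hD
  rcases lt_or_ge (a % D + b % D) D with h | h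
  · have hab : a + b = (a % D + b % D) + D * (a / D + b / D) := by
      rw [Nat.mul_add]; omega
    have hdiv : (a + b) / D = a / D + b / D := by
      rw [hab, Nat.add_mul_div_left _ _ hD, Nat.div_eq_of_lt h]; omega
    have hmod : (a + b) % D = a % D + b % D := by
      rw [hab, Nat.add_mul_mod_self_left, Nat.mod_eq_of_lt h]
    unfold ilpF
    rw [hdiv, hmod]
    have : min L (a % D + b % D) ≤ min L (a % D) + min L (b % D) := by omega
    rw [Nat.mul_add]
    omega
  · have hab : a + b = (a % D + b % D - D) + D * (a / D + b / D + 1) := by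
      rw [Nat.mul_add, Nat.mul_add]; omega
    have hlt : a % D + b % D - D < D := by omega
    have hdiv : (a + b) / D = a / D + b / D + 1 := by
      rw [hab, Nat.add_mul_div_left _ _ hD, Nat.div_eq_of_lt hlt]; omega
    have hmod : (a + b) % D = a % D + b % D - D := by
      rw [hab, Nat.add_mul_mod_self_left, Nat.mod_eq_of_lt hlt]
    unfold ilpF
    rw [hdiv, hmod, Nat.mul_add, Nat.mul_add]
    have : L + min L (a % D + b % D - D) ≤ min L (a % D) + min L (b % D) := by omega
    omega

lemma ilpF_zero : ilpF D L 0 = 0 := by simp [ilpF]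

lemma ilpF_nsmul (hL : 1 ≤ L) (hLD : L ≤ D) (n x : ℕ) :
    ilpF D L (n * x) ≤ n * ilpF D L x := by
  induction n with
  | zero => simp [ilpF]
  | succ n ih =>
      have := ilpF_subadd D L hL hLD (n * x) x
      calc ilpF D L ((n+1) * x) = ilpF D L (n * x + x) := by ring_nf
        _ ≤ ilpF D L (n * x) + ilpF D L x := this
        _ ≤ n * ilpF D L x + ilpF D L x := by omega
        _ = (n+1) * ilpF D L x := by ring

lemma ilpF_le_min (hLD : L ≤ D) {j : ℕ} (hj : j ∈ Finset.Icc 1 D) :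
    ilpF D L j = min L j := by
  simp only [Finset.mem_Icc] at hj
  have hD : 0 < D := lt_of_lt_of_le hj.1 hj.2
  rcases eq_or_lt_of_le hj.2 with h | h
  · subst h; simp [ilpF, Nat.div_self hD, Nat.mod_self]; omega
  · unfold ilpF
    rw [Nat.div_eq_of_lt h, Nat.mod_eq_of_lt h]; omega

lemma obj_eq (hLD : L ≤ D) (T : ℕ → ℕ) :
    ∑ j ∈ Finset.Icc 1 L, j * T j + ∑ j ∈ Finset.Icc (L + 1) D, L * T j
      = ∑ j ∈ Finset.Icc 1 D, min L j * T j := by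
  have h1 : Finset.Icc 1 L = Finset.Ioc 0 L := by
    ext x; simp [Finset.mem_Icc, Finset.mem_Ioc]; omega
  have h2 : Finset.Icc (L+1) D = Finset.Ioc L D := by
    ext x; simp [Finset.mem_Icc, Finset.mem_Ioc]
  have h3 : Finset.Icc 1 D = Finset.Ioc 0 D := by
    ext x; simp [Finset.mem_Icc, Finset.mem_Ioc]; omega
  rw [h1, h2, h3]
  rw [← Finset.sum_Ioc_consecutive _ (Nat.zero_le L) hLD]
  congr 1
  · apply Finset.sum_congr rfl
    intro x hx
    simp only [Finset.mem_Ioc] at hx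
    rw [min_eq_right hx.2]
  · apply Finset.sum_congr rfl
    intro x hx
    simp only [Finset.mem_Ioc] at hx
    rw [min_eq_left (le_of_lt hx.1)]

end aux

/-- The integer linear program: minimize `Σ_{j=1}^L j·T_j + Σ_{j=L+1}^D L·T_j` over
nonnegative integers `T_1, …, T_D` subject to `Σ_{j=1}^D j·T_j = K` and `T_D ≥ 1`,
where `1 ≤ L ≤ D ≤ K`, is feasible and its minimum value equals
`L·⌊K/D⌋ + min{L, R}` with `R = K % D`; in particular the assignment `T_D = ⌊K/D⌋`,
`T_R = 1` when `R > 0` (all other `T_j = 0`) is an optimal solution. -/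
theorem ilp_min_value (K D L : ℕ) (hL : 1 ≤ L) (hLD : L ≤ D) (hDK : D ≤ K) :
    IsLeast {v : ℕ | ∃ T : ℕ → ℕ,
        (∑ j ∈ Finset.Icc 1 D, j * T j = K) ∧ 1 ≤ T D ∧
        v = ∑ j ∈ Finset.Icc 1 L, j * T j + ∑ j ∈ Finset.Icc (L + 1) D, L * T j}
      (L * (K / D) + min L (K % D)) ∧
    ((∑ j ∈ Finset.Icc 1 D, j *
        ((if j = D then K / D else 0) + (if j = K % D then 1 else 0)) = K) ∧
      1 ≤ (if D = D then K / D else 0) + (if D = K % D then 1 else 0) ∧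
      (∑ j ∈ Finset.Icc 1 L, j *
          ((if j = D then K / D else 0) + (if j = K % D then 1 else 0)) +
        ∑ j ∈ Finset.Icc (L + 1) D, L *
          ((if j = D then K / D else 0) + (if j = K % D then 1 else 0)))
        = L * (K / D) + min L (K % D)) := by
  have hD : 0 < D := lt_of_lt_of_le hL hLD
  have hq : 1 ≤ K / D := Nat.one_le_div_iff hD |>.mpr hDK
  have hR : K % D < D := Nat.mod_lt _ hD
  set T : ℕ → ℕ := fun j => (if j = D then K / D else 0) + (if j = K % D then 1 else 0) with hT
  -- witness properties
  have hsum_gen : ∀ g : ℕ → ℕ, ∑ j ∈ Finset.Icc 1 D, g j * T j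
      = g D * (K / D) + (if 1 ≤ K % D then g (K % D) else 0) := by
    intro g
    have : ∀ j ∈ Finset.Icc 1 D, g j * T j
        = (if j = D then g j * (K / D) else 0) + (if j = K % D then g j else 0) := by
      intro j hj
      rw [hT]
      rcases eq_or_ne j D with h1 | h1 <;> rcases eq_or_ne j (K % D) with h2 | h2
      · exfalso; omega
      · subst h1; simp [h2]
      · subst h2; simp [h1]
      · simp [h1, h2]
    rw [Finset.sum_congr rfl this, Finset.sum_add_distrib,
        Finset.sum_ite_eq' (Finset.Icc 1 D) D (fun j => g j * (K / D)),
        Finset.sum_ite_eq' (Finset.Icc 1 D) (K % D) g]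
    have hDmem : D ∈ Finset.Icc 1 D := by simp [Finset.mem_Icc]; omega
    rw [if_pos hDmem]
    congr 1
    by_cases h : 1 ≤ K % D
    · rw [if_pos (by simp [Finset.mem_Icc]; omega), if_pos h]
    · rw [if_neg (by simp [Finset.mem_Icc]; omega), if_neg h]
  have hc1 : ∑ j ∈ Finset.Icc 1 D, j * T j = K := by
    rw [hsum_gen (fun j => j)]
    have := Nat.div_add_mod K D
    split_ifs with h <;> omega
  have hc2 : 1 ≤ T D := by
    rw [hT]; simp only [if_true, eq_self_iff_true]; omega
  have hc3 : ∑ j ∈ Finset.Icc 1 L, j * T j + ∑ j ∈ Finset.Icc (L + 1) D, L * T j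
      = L * (K / D) + min L (K % D) := by
    rw [obj_eq D L hLD, hsum_gen (fun j => min L j)]
    rw [min_eq_left hLD]
    by_cases h : 1 ≤ K % D
    · rw [if_pos h]
    · rw [if_neg h]
      have : K % D = 0 := by omega
      simp [this]
  refine ⟨⟨⟨T, hc1, hc2, hc3.symm⟩, ?_⟩, hc1, hc2, hc3⟩
  -- lower bound
  rintro v ⟨S, hS1, _, rfl⟩
  rw [obj_eq D L hLD]
  have key : ilpF D L K ≤ ∑ j ∈ Finset.Icc 1 D, min L j * S j := by
    calc ilpF D L K = ilpF D L (∑ j ∈ Finset.Icc 1 D, j * S j) := by rw [hS1]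
      _ ≤ ∑ j ∈ Finset.Icc 1 D, ilpF D L (j * S j) :=
          Finset.le_sum_of_subadditive (ilpF D L) (ilpF_zero D L).le
            (ilpF_subadd D L hL hLD) _ _
      _ ≤ ∑ j ∈ Finset.Icc 1 D, min L j * S j := by
          apply Finset.sum_le_sum
          intro j hj
          calc ilpF D L (j * S j) = ilpF D L (S j * j) := by rw [mul_comm]
            _ ≤ S j * ilpF D L j := ilpF_nsmul D L hL hLD _ _
            _ = min L j * S j := by rw [ilpF_le_min D L hLD hj, mul_comm]
  exact key
end

section
/- Let F be a field, s ≥ 1, and let x_1, …, x_s ∈ F be pairwise distinct and y_1, …, y_{s-1} ∈ F be pairwise distinct, with x_i ≠ y_j for all i, j. Let M be the (s-1)×s matrix with entries M_{j,i} = (x_i − y_j)^{-1}. Then the kernel of M (the space of column vectors c ∈ F^s with M·c = 0) is one-dimensional, and every nonzero vector c in the kernel has all s of its coordinates nonzero. -/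
open Matrix Polynomial Finset

lemma cauchy_sq (F : Type) [Field F] (n : ℕ) (x y : Fin n → F)
    (hx : Function.Injective x) (hy : Function.Injective y)
    (hxy : ∀ i j, x i ≠ y j) (c : Fin n → F)
    (h : ∀ j, ∑ i, (x i - y j)⁻¹ * c i = 0) : c = 0 := by
  classical
  set P : F[X] := ∑ i, C (c i) * ∏ k ∈ univ.erase i, (C (x k) - X) with hP
  have heval : ∀ j, P.eval (y j) = 0 := by
    intro j
    have : P.eval (y j) = (∏ k, (x k - y j)) * ∑ i, (x i - y j)⁻¹ * c i := by
      rw [hP, eval_finset_sum, Finset.mul_sum]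
      refine Finset.sum_congr rfl fun i _ => ?_
      rw [eval_mul, eval_C, eval_prod]
      simp only [eval_sub, eval_C, eval_X]
      rw [← Finset.mul_prod_erase univ (fun k => x k - y j) (mem_univ i)]
      field_simp [sub_ne_zero.mpr (hxy i j)]
    rw [this, h j, mul_zero]
  have hdeg : P.natDegree < n ∨ n = 0 := by
    rcases Nat.eq_zero_or_pos n with h0 | h0
    · exact Or.inr h0
    refine Or.inl (lt_of_le_of_lt (natDegree_sum_le _ _) ?_)
    rw [Finset.fold_max_lt]
    refine ⟨h0, fun i _ => ?_⟩
    calc (C (c i) * ∏ k ∈ univ.erase i, (C (x k) - X)).natDegree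
        ≤ (C (c i)).natDegree + (∏ k ∈ univ.erase i, (C (x k) - X)).natDegree :=
          natDegree_mul_le
      _ ≤ 0 + ∑ k ∈ univ.erase i, (C (x k) - X).natDegree := by
          gcongr
          · exact le_of_eq (natDegree_C _)
          · exact natDegree_prod_le _ _
      _ ≤ 0 + ∑ k ∈ univ.erase i, 1 := by
          gcongr with k hk
          exact (natDegree_sub_le _ _).trans (by simp)
      _ < n := by
          simp [Finset.card_erase_of_mem, Fintype.card_fin]
          omega
  rcases hdeg with hdeg | h0
  · have hP0 : P = 0 :=
      Polynomial.eq_zero_of_natDegree_lt_card_of_eval_eq_zero P hy heval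
        (by simpa using hdeg)
    funext i
    have := congrArg (Polynomial.eval (x i)) hP0
    rw [hP, eval_finset_sum] at this
    simp only [eval_mul, eval_C, eval_prod, eval_sub, eval_X, eval_zero] at this
    rw [Finset.sum_eq_single i] at this
    · rcases mul_eq_zero.mp this with h1 | h1
      · exact h1
      · exfalso
        obtain ⟨k, hk, hk0⟩ := Finset.prod_eq_zero_iff.mp h1
        exact (Finset.mem_erase.mp hk).1 (hx (sub_eq_zero.mp hk0))
    · intro b _ hb
      refine mul_eq_zero_of_right _ (Finset.prod_eq_zero (Finset.mem_erase.mpr ⟨hb.symm, mem_univ i⟩) ?_)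
      simp
    · simp
  · subst h0
    exact funext fun i => absurd i.2 (by omega)


/-- Let `x_1, …, x_s` be pairwise distinct and `y_1, …, y_{s-1}` be pairwise distinct
elements of a field `F` with `x_i ≠ y_j` for all `i, j`, and let `M` be the
`(s-1) × s` Cauchy-type matrix with entries `M_{j,i} = (x_i − y_j)⁻¹`. Then the kernel
of `M` is one-dimensional and every nonzero vector in the kernel has all of its `s`
coordinates nonzero. -/
theorem cauchy_kernel_one_dim_all_coords_nonzero (F : Type) [Field F] (s : ℕ)
    (hs : 1 ≤ s) (x : Fin s → F) (y : Fin (s - 1) → F)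
    (hx : Function.Injective x) (hy : Function.Injective y)
    (hxy : ∀ i j, x i ≠ y j)
    (M : Matrix (Fin (s - 1)) (Fin s) F)
    (hM : ∀ j i, M j i = (x i - y j)⁻¹) :
    Module.finrank F (LinearMap.ker M.mulVecLin) = 1 ∧
    ∀ c : Fin s → F, M.mulVec c = 0 → c ≠ 0 → ∀ i, c i ≠ 0 := by
  classical
  obtain ⟨n, rfl⟩ : ∃ n, s = n + 1 := ⟨s - 1, (Nat.succ_pred_eq_of_pos hs).symm⟩
  -- `s - 1 = n` definitionally
  have key : ∀ c : Fin (n + 1) → F, M.mulVec c = 0 → ∀ i₀, c i₀ = 0 → c = 0 := by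
    intro c hc i₀ hi₀
    have hker : ∀ j, ∑ i, (x i - y j)⁻¹ * c i = 0 := by
      intro j
      have := congrFun hc j
      simpa [Matrix.mulVec, dotProduct, hM] using this
    have h' : ∀ j, ∑ i : Fin n, (x (i₀.succAbove i) - y j)⁻¹ * c (i₀.succAbove i) = 0 := by
      intro j
      have := hker j
      rw [Fin.sum_univ_succAbove _ i₀, hi₀, mul_zero, zero_add] at this
      exact this
    have := cauchy_sq F n (x ∘ i₀.succAbove) (y)
      (hx.comp (Fin.succAbove_right_injective))
      hy (fun i j => hxy _ j) (c ∘ i₀.succAbove) h'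
    funext i
    rcases eq_or_ne i i₀ with rfl | hne
    · exact hi₀
    · obtain ⟨k, rfl⟩ := Fin.exists_succAbove_eq hne
      exact congrFun this k
  have part2 : ∀ c : Fin (n + 1) → F, M.mulVec c = 0 → c ≠ 0 → ∀ i, c i ≠ 0 := by
    intro c hc hne i hi
    exact hne (key c hc i hi)
  refine ⟨?_, part2⟩
  -- the kernel is nontrivial
  have hker_ne : LinearMap.ker M.mulVecLin ≠ ⊥ := by
    intro hbot
    have hinj : Function.Injective M.mulVecLin := LinearMap.ker_eq_bot.mp hbot
    have := LinearMap.finrank_le_finrank_of_injective hinj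
    simp [Module.finrank_pi] at this
  obtain ⟨c, hcmem, hcne⟩ := Submodule.exists_mem_ne_zero_of_ne_bot hker_ne
  have hc0 : c 0 ≠ 0 := part2 c (by simpa using hcmem) hcne 0
  have hspan : LinearMap.ker M.mulVecLin = Submodule.span F {c} := by
    apply le_antisymm
    · intro d hd
      have hd' : M.mulVec d = 0 := by simpa using hd
      have hc' : M.mulVec c = 0 := by simpa using hcmem
      have he : M.mulVec (d - (d 0 / c 0) • c) = 0 := by
        rw [Matrix.mulVec_sub, Matrix.mulVec_smul, hd', hc', smul_zero, sub_zero]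
      have he0 : (d - (d 0 / c 0) • c) 0 = 0 := by
        simp [div_mul_cancel₀ _ hc0]
      have := key _ he 0 he0
      rw [sub_eq_zero.mp this]
      exact Submodule.smul_mem _ _ (Submodule.mem_span_singleton_self c)
    · rw [Submodule.span_le, Set.singleton_subset_iff]
      exact hcmem
  rw [hspan]
  exact finrank_span_singleton hcne
end

section
/- Let F be a field, s ≥ 1, and let x_1, …, x_s ∈ F be pairwise distinct and y_1, …, y_{s-1} ∈ F be pairwise distinct, with x_i ≠ y_j for all i, j. Let M be the (s-1)×s matrix with entries M_{j,i} = (x_i − y_j)^{-1}. Let y_* ∈ F be an element distinct from y_1, …, y_{s-1} and from x_1, …, x_s. Then for every nonzero c ∈ F^s with M·c = 0, one has Σ_{i=1}^{s} c_i·(x_i − y_*)^{-1} ≠ 0. -/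
open Matrix Polynomial Finset

/-- Key identity: evaluating the interpolation-type sum at a point `z` distinct
from all `x k` factors out the full product. -/
lemma cauchy_aux_sum_eq {F : Type} [Field F] {s : ℕ} (x : Fin s → F) (c : Fin s → F)
    (z : F) (hz : ∀ k, x k ≠ z) :
    ∑ i, c i * ∏ k ∈ Finset.univ.erase i, (x k - z)
      = (∏ k, (x k - z)) * ∑ i, c i * (x i - z)⁻¹ := by
  rw [Finset.mul_sum]
  refine Finset.sum_congr rfl fun i _ => ?_
  have hne : x i - z ≠ 0 := sub_ne_zero_of_ne (hz i)
  rw [← Finset.mul_prod_erase Finset.univ _ (Finset.mem_univ i)]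
  field_simp

/-- Let `x_1, …, x_s` be pairwise distinct and `y_1, …, y_{s-1}` be pairwise distinct
elements of a field `F` with `x_i ≠ y_j` for all `i, j`, let `M` be the `(s-1) × s`
Cauchy-type matrix with entries `M_{j,i} = (x i − y_j)⁻¹`, and let `y⋆` be distinct
from all the `y_j` and all the `x_i`. Then for every nonzero `c` in the kernel of `M`,
`Σ_i c_i·(x_i − y⋆)⁻¹ ≠ 0`. -/
theorem cauchy_kernel_extra_row_ne_zero (F : Type) [Field F] (s : ℕ)
    (hs : 1 ≤ s) (x : Fin s → F) (y : Fin (s - 1) → F)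
    (hx : Function.Injective x) (hy : Function.Injective y)
    (hxy : ∀ i j, x i ≠ y j)
    (M : Matrix (Fin (s - 1)) (Fin s) F)
    (hM : ∀ j i, M j i = (x i - y j)⁻¹)
    (ystar : F) (hy1 : ∀ j, ystar ≠ y j) (hy2 : ∀ i, ystar ≠ x i)
    (c : Fin s → F) (hc : c ≠ 0) (hker : M.mulVec c = 0) :
    ∑ i, c i * (x i - ystar)⁻¹ ≠ 0 := by
  intro hsum
  -- The interpolation polynomial
  set P : F[X] := ∑ i, C (c i) * ∏ k ∈ Finset.univ.erase i, (C (x k) - X) with hP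
  have hevalP : ∀ z : F, P.eval z = ∑ i, c i * ∏ k ∈ Finset.univ.erase i, (x k - z) := by
    intro z
    simp [hP, eval_finset_sum, eval_prod]
  -- degree bound
  have hdeg : P.natDegree < s := by
    have : P.natDegree ≤ s - 1 := by
      apply Polynomial.natDegree_sum_le_of_forall_le
      intro i _
      refine le_trans (Polynomial.natDegree_mul_le) ?_
      simp only [Polynomial.natDegree_C, zero_add]
      refine le_trans (Polynomial.natDegree_prod_le _ _) ?_
      have h1 : ∀ k ∈ Finset.univ.erase i, (C (x k) - X).natDegree ≤ 1 := fun k _ => by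
        simpa using Polynomial.natDegree_sub_le (C (x k)) X
      have h2 := Finset.sum_le_card_nsmul (Finset.univ.erase i)
        (fun k => (C (x k) - X).natDegree) 1 h1
      simpa [Finset.card_erase_of_mem] using h2
    omega
  -- the s evaluation points
  set f : Fin s → F := fun j => if h : (j : ℕ) < s - 1 then y ⟨j, h⟩ else ystar with hf
  have hfinj : Function.Injective f := by
    intro a b hab
    simp only [hf] at hab
    by_cases ha : (a : ℕ) < s - 1 <;> by_cases hb : (b : ℕ) < s - 1 <;>
      simp [ha, hb] at hab
    · have := hy hab
      ext
      simpa using congrArg Fin.val this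
    · exact absurd hab.symm (hy1 _)
    · exact absurd hab (hy1 _)
    · ext; omega
  have hroots : ∀ j, P.eval (f j) = 0 := by
    intro j
    rw [hevalP]
    by_cases h : (j : ℕ) < s - 1
    · have hz : ∀ k, x k ≠ y ⟨j, h⟩ := fun k => hxy k _
      rw [show f j = y ⟨j, h⟩ by simp [hf, h]]
      rw [cauchy_aux_sum_eq x c _ hz]
      have h0 := congrFun hker ⟨j, h⟩
      simp only [Matrix.mulVec, dotProduct, Pi.zero_apply] at h0
      have : ∑ i, c i * (x i - y ⟨j, h⟩)⁻¹ = 0 := by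
        rw [← h0]
        exact Finset.sum_congr rfl fun i _ => by rw [hM]; ring
      rw [this, mul_zero]
    · have hz : ∀ k, x k ≠ ystar := fun k => (hy2 k).symm
      rw [show f j = ystar by simp [hf, h]]
      rw [cauchy_aux_sum_eq x c _ hz, hsum, mul_zero]
  have hP0 : P = 0 := by
    apply Polynomial.eq_zero_of_natDegree_lt_card_of_eval_eq_zero P hfinj hroots
    simpa using hdeg
  -- evaluate at x i to get c = 0
  apply hc
  funext i
  have h0 : P.eval (x i) = 0 := by rw [hP0]; simp
  rw [hevalP] at h0
  rw [Finset.sum_eq_single i] at h0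
  · have hprod : ∏ k ∈ Finset.univ.erase i, (x k - x i) ≠ 0 := by
      refine Finset.prod_ne_zero_iff.2 fun k hk => ?_
      exact sub_ne_zero_of_ne fun h => (Finset.mem_erase.1 hk).1 (hx h)
    simpa using (mul_eq_zero.1 h0).resolve_right hprod
  · intro b _ hbi
    have : ∏ k ∈ Finset.univ.erase b, (x k - x i) = 0 :=
      Finset.prod_eq_zero (Finset.mem_erase.2 ⟨fun h => hbi h.symm, Finset.mem_univ i⟩)
        (by ring)
    rw [this, mul_zero]
  · intro h; exact absurd (Finset.mem_univ i) h
end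

section
/- Let F be a field and 1 ≤ k ≤ n integers. If F contains at least n elements, then there exists a k×n matrix over F such that every k×k submatrix formed by k of its columns is invertible (i.e., a k×n MDS matrix over F exists). -/
open Matrix

/-- If a field `F` contains at least `n` elements and `1 ≤ k ≤ n`, then there exists a
`k × n` MDS matrix over `F`, i.e. a `k × n` matrix such that every `k × k` submatrix
formed by `k` of its columns is invertible. -/
theorem exists_mds_matrix (F : Type) [Field F] (k n : ℕ) (hk : 1 ≤ k) (hkn : k ≤ n)
    (hcard : ∃ f : Fin n → F, Function.Injective f) :
    ∃ M : Matrix (Fin k) (Fin n) F,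
      ∀ g : Fin k → Fin n, Function.Injective g → (M.submatrix id g).det ≠ 0 := by
  obtain ⟨f, hf⟩ := hcard
  refine ⟨Matrix.of fun i j => f j ^ (i : ℕ), fun g hg => ?_⟩
  have this : (Matrix.of fun (i : Fin k) (j : Fin n) => f j ^ (i : ℕ)).submatrix id g =
      (Matrix.vandermonde (f ∘ g))ᵀ := by
    ext i j; simp [Matrix.vandermonde, Matrix.submatrix]
  rw [this, Matrix.det_transpose, Matrix.det_vandermonde]
  refine Finset.prod_ne_zero_iff.2 fun i _ => Finset.prod_ne_zero_iff.2 fun j hj => ?_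
  have : g j ≠ g i := fun h => absurd (hg h) (Finset.mem_Ioi.1 hj).ne'
  exact sub_ne_zero.2 fun h => this (hf h)
end

section
/- Let F be a field, t ≥ 1 and m ≥ 1 integers, and let x_1, …, x_m, y_1, …, y_t be t+m pairwise distinct elements of F. Let {k_1, …, k_r} ⊆ {1,…,t} and {l_1, …, l_s} ⊆ {1,…,m} be subsets (r ≥ 0, s ≥ 1) with r + s = t + 1. Then there exist nonzero scalars c_1, …, c_s ∈ F such that Σ_{i=1}^{s} c_i·(x_{l_i} − y_k)^{-1} = 0 for every k ∈ {1,…,t} \ {k_1,…,k_r}, and Σ_{i=1}^{s} c_i·(x_{l_i} − y_{k_j})^{-1} ≠ 0 for every j ∈ {1,…,r}. -/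
open Polynomial Lagrange Finset

/-- **Coefficient-existence lemma for partial interference alignment.** Let
`x_1, …, x_m, y_1, …, y_t` be `t + m` pairwise distinct elements of a field `F`, and
let `{k_1, …, k_r} ⊆ {1, …, t}` and `{l_1, …, l_s} ⊆ {1, …, m}` (with `s ≥ 1` and
`r + s = t + 1`). Then there exist nonzero scalars `c_1, …, c_s` such that
`Σ_i c_i·(x_{l_i} − y_k)⁻¹ = 0` for every `k ∉ {k_1, …, k_r}`, while
`Σ_i c_i·(x_{l_i} − y_{k_j})⁻¹ ≠ 0` for every `j`. -/
theorem exists_alignment_coefficients (F : Type) [Field F] (t m : ℕ)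
    (ht : 1 ≤ t) (hm : 1 ≤ m)
    (x : Fin m → F) (y : Fin t → F)
    (hx : Function.Injective x) (hy : Function.Injective y)
    (hxy : ∀ i j, x i ≠ y j)
    (r s : ℕ) (hs : 1 ≤ s) (hrs : r + s = t + 1)
    (k : Fin r → Fin t) (hk : Function.Injective k)
    (l : Fin s → Fin m) (hl : Function.Injective l) :
    ∃ c : Fin s → F, (∀ i, c i ≠ 0) ∧
      (∀ kk : Fin t, kk ∉ Set.range k → ∑ i, c i * (x (l i) - y kk)⁻¹ = 0) ∧
      (∀ j : Fin r, ∑ i, c i * (x (l i) - y (k j))⁻¹ ≠ 0) := by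
  classical
  set v : Fin s → F := fun i => x (l i) with hv
  have hvinj : Function.Injective v := hx.comp hl
  set S : Finset (Fin t) := Finset.univ.filter (fun kk => kk ∉ Set.range k) with hS
  have hScard : S.card ≤ s - 1 := by
    have h2 : Sᶜ.card = r := by
      have : Sᶜ = Finset.image k Finset.univ := by
        ext kk; simp [hS, Set.mem_range]
      rw [this, Finset.card_image_of_injective _ hk, Finset.card_univ, Fintype.card_fin]
    have h3 := Finset.card_compl_add_card S
    rw [h2, Fintype.card_fin] at h3
    omega
  set f : F[X] := ∏ kk ∈ S, (X - C (y kk)) with hf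
  have hfdeg : f.degree < (Finset.univ : Finset (Fin s)).card := by
    rw [hf, Polynomial.degree_prod]
    simp only [Polynomial.degree_X_sub_C]
    rw [Finset.sum_const, Finset.card_univ, Fintype.card_fin, nsmul_eq_mul, mul_one]
    exact_mod_cast lt_of_le_of_lt (Nat.cast_le.mpr hScard) (Nat.cast_lt.mpr (by omega))
  have hvS : Set.InjOn v (Finset.univ : Finset (Fin s)) := fun a _ b _ h => hvinj h
  have hinterp := Lagrange.eq_interpolate (f := f) hvS hfdeg
  -- key identity
  have key : ∀ z : F, (∀ i, z ≠ v i) →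
      ∑ i, (nodalWeight Finset.univ v i * f.eval (v i)) * (z - v i)⁻¹
        = f.eval z / ∏ i, (z - v i) := by
    intro z hz
    have hnz : (∏ i, (z - v i)) ≠ 0 :=
      Finset.prod_ne_zero_iff.mpr fun i _ => sub_ne_zero_of_ne (hz i)
    have := Lagrange.eval_interpolate_not_at_node (s := Finset.univ) (v := v)
      (fun i => f.eval (v i)) (x := z) (fun i _ => hz i)
    rw [← hinterp, eval_nodal] at this
    rw [eq_div_iff hnz, this]
    rw [mul_comm]
    congr 1
    refine Finset.sum_congr rfl fun i _ => by ring
  refine ⟨fun i => -(nodalWeight Finset.univ v i * f.eval (v i)), ?_, ?_, ?_⟩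
  · intro i
    have h1 : nodalWeight Finset.univ v i ≠ 0 :=
      nodalWeight_ne_zero hvS (Finset.mem_univ i)
    have h2 : f.eval (v i) ≠ 0 := by
      rw [hf, Polynomial.eval_prod]
      exact Finset.prod_ne_zero_iff.mpr fun kk _ => by
        simpa using sub_ne_zero_of_ne (hxy (l i) kk)
    simpa using mul_ne_zero h1 h2
  · intro kk hkk
    have hz : ∀ i, y kk ≠ v i := fun i => (hxy (l i) kk).symm
    have := key (y kk) hz
    have hz0 : f.eval (y kk) = 0 := by
      rw [hf, Polynomial.eval_prod]
      refine Finset.prod_eq_zero (i := kk) ?_ (by simp)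
      simp only [hS, Finset.mem_filter, Finset.mem_univ, true_and]
      exact hkk
    calc ∑ i, -(nodalWeight Finset.univ v i * f.eval (v i)) * (x (l i) - y kk)⁻¹
        = ∑ i, (nodalWeight Finset.univ v i * f.eval (v i)) * (y kk - v i)⁻¹ := by
          refine Finset.sum_congr rfl fun i _ => ?_
          rw [hv]
          rw [show x (l i) - y kk = -(y kk - x (l i)) by ring, inv_neg]
          ring
      _ = f.eval (y kk) / ∏ i, (y kk - v i) := this
      _ = 0 := by rw [hz0, zero_div]
  · intro j
    have hz : ∀ i, y (k j) ≠ v i := fun i => (hxy (l i) (k j)).symm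
    have heq : ∑ i, -(nodalWeight Finset.univ v i * f.eval (v i)) * (x (l i) - y (k j))⁻¹
        = f.eval (y (k j)) / ∏ i, (y (k j) - v i) := by
      rw [← key (y (k j)) hz]
      refine Finset.sum_congr rfl fun i _ => ?_
      rw [hv, show x (l i) - y (k j) = -(y (k j) - x (l i)) by ring, inv_neg]
      ring
    rw [heq]
    have hnum : f.eval (y (k j)) ≠ 0 := by
      rw [hf, Polynomial.eval_prod]
      refine Finset.prod_ne_zero_iff.mpr fun kk hkkS => ?_
      simp only [Polynomial.eval_sub, Polynomial.eval_X, Polynomial.eval_C]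
      refine sub_ne_zero_of_ne (fun h => ?_)
      have hkj : k j = kk := hy h
      simp only [hS, Finset.mem_filter, Finset.mem_univ, true_and, Set.mem_range] at hkkS
      exact hkkS ⟨j, hkj⟩
    have hden : (∏ i, (y (k j) - v i)) ≠ 0 :=
      Finset.prod_ne_zero_iff.mpr fun i _ => sub_ne_zero_of_ne (hz i)
    exact div_ne_zero hnum hden
end

section
/- Let F be a field, 1 ≤ L ≤ D integers and R ≥ 0. Let V be an L×D matrix over F with rank L, and let Λ be a (D−L)×D matrix over F with rank D−L and Λ·Vᵀ = 0 (a parity-check matrix of the code generated by V). Let h_1 < h_2 < … < h_D be indices in {1,…,D+R}, and let H be a (D−L)×(D+R) matrix over F with rank D−L whose column submatrix at positions h_1,…,h_D equals Λ. Let G be an (L+R)×(D+R) matrix over F with rank L+R and H·Gᵀ = 0. Define V̂ as the L×(D+R) matrix whose column at position h_j equals the j-th column of V for each j ∈ {1,…,D}, and whose all other columns are zero. Then the row space of V̂ is contained in the row space of G; equivalently, there exists an L×(L+R) matrix E over F with E·G = V̂. -/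
open Matrix

/-- **Recoverability step of GPC-PIA for `L > S`.** Let `V` be an `L × D` matrix of
rank `L`, let `Λ` be a `(D−L) × D` parity-check matrix of the code generated by `V`
(full rank, `Λ·Vᵀ = 0`), let `h_1 < … < h_D` be positions in `{1, …, D+R}`, let `H` be
a full-rank `(D−L) × (D+R)` matrix whose column submatrix at positions `h_1, …, h_D`
equals `Λ`, and let `G` be a full-rank `(L+R) × (D+R)` matrix with `H·Gᵀ = 0`.
If `V̂` is the `L × (D+R)` matrix placing the `j`-th column of `V` at position `h_j`
and zeros elsewhere, then the row space of `V̂` is contained in the row space of `G`: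
there exists an `L × (L+R)` matrix `E` with `E·G = V̂`. -/
theorem vhat_row_space_le_row_space (F : Type) [Field F] (L D R : ℕ)
    (hL : 1 ≤ L) (hLD : L ≤ D)
    (V : Matrix (Fin L) (Fin D) F) (hVrank : V.rank = L)
    (Lam : Matrix (Fin (D - L)) (Fin D) F) (hLamRank : Lam.rank = D - L)
    (hLamV : Lam * Vᵀ = 0)
    (h : Fin D → Fin (D + R)) (hmono : StrictMono h)
    (Hm : Matrix (Fin (D - L)) (Fin (D + R)) F) (hHmRank : Hm.rank = D - L)
    (hHmCol : ∀ i j, Hm i (h j) = Lam i j)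
    (G : Matrix (Fin (L + R)) (Fin (D + R)) F) (hGrank : G.rank = L + R)
    (hHG : Hm * Gᵀ = 0)
    (Vhat : Matrix (Fin L) (Fin (D + R)) F)
    (hVhat1 : ∀ l j, Vhat l (h j) = V l j)
    (hVhat2 : ∀ l c, (∀ j, h j ≠ c) → Vhat l c = 0) :
    ∃ E : Matrix (Fin L) (Fin (L + R)) F, E * G = Vhat := by

  classical
  set K := LinearMap.ker Hm.mulVecLin with hK
  -- rows of G lie in K
  have hle : LinearMap.range Gᵀ.mulVecLin ≤ K := by
    rintro _ ⟨x, rfl⟩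
    simp only [hK, LinearMap.mem_ker, Matrix.mulVecLin_apply]
    rw [Matrix.mulVec_mulVec, hHG, Matrix.zero_mulVec]
  -- dimension count
  have hrange : Module.finrank F (LinearMap.range Gᵀ.mulVecLin) = L + R := by
    have : Gᵀ.rank = L + R := by rw [Matrix.rank_transpose, hGrank]
    simpa [Matrix.rank] using this
  have hkerdim : Module.finrank F K = L + R := by
    have h1 := LinearMap.finrank_range_add_finrank_ker Hm.mulVecLin
    rw [Module.finrank_fin_fun] at h1
    have h2 : Module.finrank F (LinearMap.range Hm.mulVecLin) = D - L := by
      simpa [Matrix.rank] using hHmRank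
    rw [h2] at h1
    rw [hK]
    omega
  have heq : LinearMap.range Gᵀ.mulVecLin = K :=
    Submodule.eq_of_le_of_finrank_le hle (by rw [hrange, hkerdim])
  -- rows of Vhat lie in K
  have hrow : ∀ l, Vhat l ∈ K := by
    intro l
    simp only [hK, LinearMap.mem_ker, Matrix.mulVecLin_apply]
    funext i
    have hz := congrFun (congrFun hLamV i) l
    simp only [Matrix.mul_apply, Matrix.transpose_apply, Matrix.zero_apply] at hz
    have hsub : (∑ c, Hm i c * Vhat l c)
        = ∑ c ∈ Finset.univ.image h, Hm i c * Vhat l c := by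
      refine (Finset.sum_subset (Finset.subset_univ _) ?_).symm
      intro c _ hc
      rw [hVhat2 l c (fun j hj => hc (Finset.mem_image.mpr ⟨j, Finset.mem_univ j, hj⟩)),
        mul_zero]
    have : (Hm *ᵥ Vhat l) i = ∑ j, Lam i j * V l j := by
      simp only [Matrix.mulVec, dotProduct]
      rw [hsub, Finset.sum_image (fun a _ b _ hab => hmono.injective hab)]
      simp [hVhat1, hHmCol]
    rw [this, hz]
    rfl
  have hmem : ∀ l, Vhat l ∈ LinearMap.range Gᵀ.mulVecLin := fun l => heq ▸ hrow l
  choose x hx using hmem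
  refine ⟨Matrix.of x, ?_⟩
  ext l j
  have := congrFun (hx l) j
  simp only [Matrix.mulVecLin_apply, Matrix.mulVec, dotProduct,
    Matrix.transpose_apply] at this
  simp only [Matrix.mul_apply, Matrix.of_apply]
  rw [← this]
  exact Finset.sum_congr rfl fun i _ => mul_comm _ _
end
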